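/- For an odd prime N, the time-scaled Zadoff–Chu sequence equals a modulated Zadoff–Chu sequence with inverted root: conj(x_u[u⁻¹ k]) = conj(x_{u⁻¹}[k]) · exp(-iπ k (u⁻¹ − 1)(N+1)/N) for every integer k. -/

import Mathlib

open Complex

/-- The time-scaled Zadoff–Chu sequence equals a modulated Zadoff–Chu sequence with
inverted root. -/
theorem zc_time_scaled (N : ℕ) (hN : N.Prime) (hodd : Odd N) (u uinv : ℤ)
    (hu : Int.gcd u (N : ℤ) = 1) (hinv : u * uinv ≡ 1 [ZMOD (N : ℤ)])
    (x : ℤ → ℤ → ℂ)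
    (hx : ∀ w n : ℤ, x w n =
      Complex.exp (-((Real.pi : ℂ) * w * (n : ℂ) * ((n : ℂ) + 1) / N) * Complex.I))
    (k : ℤ) :
    (starRingEnd ℂ) (x u (uinv * k))
      = (starRingEnd ℂ) (x uinv k)
        * Complex.exp (-((Real.pi : ℂ) * k * ((uinv : ℂ) - 1) * ((N : ℂ) + 1) / N)
            * Complex.I) := by
  have hN0 : (N : ℂ) ≠ 0 := Nat.cast_ne_zero.mpr hN.pos.ne'
  obtain ⟨m, hm⟩ : (N : ℤ) ∣ u * uinv - 1 := Int.ModEq.dvd hinv.symm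
  -- parity
  have hEven : Even (k * (uinv - 1) + m * (k * (uinv * k + 1))) := by
    have h2 : ∀ u' uinv' m' k' : ZMod 2, u' * uinv' - 1 = m' →
        k' * (uinv' - 1) + m' * (k' * (uinv' * k' + 1)) = 0 := by decide
    have hNcast : ((N : ℕ) : ZMod 2) = 1 := by
      obtain ⟨j, hj⟩ := hodd
      rw [hj]; push_cast; rw [show ((2:ZMod 2)) = 0 from rfl]; ring
    rw [even_iff_two_dvd, show (2:ℤ) = ((2:ℕ):ℤ) from rfl, ← ZMod.intCast_zmod_eq_zero_iff_dvd]
    push_cast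
    apply h2 (u : ZMod 2)
    have := congrArg (fun z : ℤ => (z : ZMod 2)) hm
    push_cast at this
    rw [hNcast] at this
    linear_combination this
  obtain ⟨t, ht⟩ := hEven
  have key : u * (uinv * k) * (uinv * k + 1)
      = uinv * k * (k + 1) - k * (uinv - 1) * ((N : ℤ) + 1) + 2 * N * t := by
    linear_combination (k * (uinv * k + 1)) * hm + (N : ℤ) * ht
  rw [hx, hx, ← Complex.exp_conj, ← Complex.exp_conj, ← Complex.exp_add]
  simp only [map_mul, map_div₀, map_neg, Complex.conj_I, map_add, map_one, map_sub,
    Complex.conj_ofReal, map_intCast, map_natCast]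
  rw [Complex.exp_eq_exp_iff_exists_int]
  refine ⟨t, ?_⟩
  have keyC : ((u : ℂ) * (uinv * k) * (uinv * k + 1))
      = uinv * k * (k + 1) - k * (uinv - 1) * ((N : ℂ) + 1) + 2 * N * t := by
    exact_mod_cast congrArg (fun z : ℤ => (z : ℂ)) key
  push_cast
  field_simp
  linear_combination keyC
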